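/- Let A be a nonzero m×n real matrix and suppose that k GE steps (3 ≤ k ≤ min(m,n)) are performed on A with all pivot qualities equal to a common value β ∈ (0,1]. Then, using the bound H_{k−2} ≤ 1 + log k on the harmonic number, the intermediate growth factor satisfies ρ_k(A) ≤ 4 · β^{−3} · k^{1/2 − log β + (1/4)·log k}. In particular, compared to complete pivoting without mistakes, the growth bound degrades only by the polynomial factor proportional to k^{−log β}. -/

import Mathlib

open Finset Real

/-- One Gaussian elimination step on `A` with pivot position `(i, j)`:
`A_{st} - A_{sj} A_{it} / A_{ij}`. -/
noncomputable def geStep {m n : ℕ} (A : Matrix (Fin m) (Fin n) ℝ) (i : Fin m) (j : Fin n) :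
    Matrix (Fin m) (Fin n) ℝ :=
  Matrix.of fun s t => A s t - A s j * A i t / A i j

/-- The matrix `A^{(r)}` after `r` GE steps on `A`, where step `r` uses pivot
position `piv (r - 1)` (so `piv` is 0-indexed). -/
noncomputable def geIter {m n : ℕ} (A : Matrix (Fin m) (Fin n) ℝ)
    (piv : ℕ → Fin m × Fin n) : ℕ → Matrix (Fin m) (Fin n) ℝ
  | 0 => A
  | r + 1 => geStep (geIter A piv r) (piv r).1 (piv r).2

/-- Maximum absolute entry of a matrix. -/
noncomputable def maxAbs {m n : ℕ} (A : Matrix (Fin m) (Fin n) ℝ) : ℝ :=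
  ⨆ s, ⨆ t, |A s t|

/-- The magnitude `p_r = |A^{(r-1)}_{i_r j_r}|` of the `r`-th pivot (1-indexed `r`). -/
noncomputable def pivMag {m n : ℕ} (A : Matrix (Fin m) (Fin n) ℝ)
    (piv : ℕ → Fin m × Fin n) (r : ℕ) : ℝ :=
  |geIter A piv (r - 1) (piv (r - 1)).1 (piv (r - 1)).2|


section Aux
variable {m n : ℕ} (A : Matrix (Fin m) (Fin n) ℝ)

variable {m n : ℕ} (A : Matrix (Fin m) (Fin n) ℝ)


lemma abs_le_maxAbs [NeZero m] [NeZero n] (s : Fin m) (t : Fin n) : |A s t| ≤ maxAbs A := by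
  have h1 : |A s t| ≤ ⨆ t, |A s t| :=
    le_ciSup (Set.Finite.bddAbove (Set.finite_range fun t => |A s t|)) t
  exact h1.trans (le_ciSup (Set.Finite.bddAbove (Set.finite_range fun s => ⨆ t, |A s t|)) s)

lemma maxAbs_nonneg [NeZero m] [NeZero n] : 0 ≤ maxAbs A :=
  (abs_nonneg _).trans (abs_le_maxAbs A ⟨0, Nat.pos_of_ne_zero (NeZero.ne m)⟩
    ⟨0, Nat.pos_of_ne_zero (NeZero.ne n)⟩)

lemma exists_maxAbs [NeZero m] [NeZero n] : ∃ s t, maxAbs A = |A s t| := by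
  have hm : Nonempty (Fin m) := ⟨⟨0, Nat.pos_of_ne_zero (NeZero.ne m)⟩⟩
  have hn : Nonempty (Fin n) := ⟨⟨0, Nat.pos_of_ne_zero (NeZero.ne n)⟩⟩
  obtain ⟨⟨s, t⟩, hst⟩ := Finite.exists_max (fun p : Fin m × Fin n => |A p.1 p.2|)
  refine ⟨s, t, le_antisymm ?_ (abs_le_maxAbs A s t)⟩
  refine ciSup_le fun s' => ciSup_le fun t' => hst (s', t')

lemma maxAbs_pos [NeZero m] [NeZero n] (hA : A ≠ 0) : 0 < maxAbs A := by
  have : ∃ s t, A s t ≠ 0 := by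
    by_contra h
    push_neg at h
    exact hA (by ext s t; simp [h])
  obtain ⟨s, t, h⟩ := this
  exact lt_of_lt_of_le (abs_pos.2 h) (abs_le_maxAbs A s t)

end Aux

section Aux2

variable {m n : ℕ} (A : Matrix (Fin m) (Fin n) ℝ) (piv : ℕ → Fin m × Fin n)

lemma geStep_apply (M : Matrix (Fin m) (Fin n) ℝ) (i : Fin m) (j : Fin n) (s t) :
    geStep M i j s t = M s t - M s j * M i t / M i j := rfl

lemma geIter_succ (r : ℕ) :
    geIter A piv (r + 1) = geStep (geIter A piv r) (piv r).1 (piv r).2 := rfl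

lemma geIter_pivot_row_zero {a l : ℕ} (hal : a < l)
    (ha : geIter A piv a (piv a).1 (piv a).2 ≠ 0) (t : Fin n) :
    geIter A piv l (piv a).1 t = 0 := by
  induction l generalizing t with
  | zero => omega
  | succ l ih =>
    rcases Nat.lt_or_ge a l with h | h
    · have h0 : ∀ t, geIter A piv l (piv a).1 t = 0 := fun t => ih h t
      simp [geIter_succ, geStep_apply, h0]
    · have : a = l := by omega
      subst this
      simp only [geIter_succ, geStep_apply]
      field_simp
      ring

lemma geIter_pivot_col_zero {a l : ℕ} (hal : a < l)
    (ha : geIter A piv a (piv a).1 (piv a).2 ≠ 0) (s : Fin m) :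
    geIter A piv l s (piv a).2 = 0 := by
  induction l generalizing s with
  | zero => omega
  | succ l ih =>
    rcases Nat.lt_or_ge a l with h | h
    · have h0 : ∀ s, geIter A piv l s (piv a).2 = 0 := fun s => ih h s
      simp [geIter_succ, geStep_apply, h0]
    · have : a = l := by omega
      subst this
      simp only [geIter_succ, geStep_apply]
      field_simp
      ring

lemma geIter_shift (j : ℕ) : ∀ l, geIter A piv (j + l) = geIter (geIter A piv j) (fun i => piv (j + i)) l
  | 0 => rfl
  | l + 1 => by
    show geIter A piv (j + l + 1) = _
    rw [geIter_succ, geIter_shift j l]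
    rfl

lemma geIter_telescope (r : ℕ) (s : Fin m) (t : Fin n) :
    A s t = (∑ l ∈ range r, geIter A piv l s (piv l).2 * geIter A piv l (piv l).1 t /
      geIter A piv l (piv l).1 (piv l).2) + geIter A piv r s t := by
  induction r with
  | zero => simp [geIter]
  | succ r ih =>
    rw [Finset.sum_range_succ, ih, geIter_succ, geStep_apply]
    ring

/-- The key determinant identity: the bordered minor of `A` on the pivot rows/columns
together with row `s`, column `t` has determinant `(∏ pivots) * A^{(r)}_{st}`. -/
lemma det_minor_eq (r : ℕ) (hr : ∀ l < r, geIter A piv l (piv l).1 (piv l).2 ≠ 0)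
    (s : Fin m) (t : Fin n) :
    Matrix.det (Matrix.of fun a b : Fin (r + 1) =>
      A (if (a : ℕ) < r then (piv (a : ℕ)).1 else s) (if (b : ℕ) < r then (piv (b : ℕ)).2 else t))
    = (∏ l ∈ range r, geIter A piv l (piv l).1 (piv l).2) * geIter A piv r s t := by
  set rowf : Fin (r + 1) → Fin m := fun a => if (a : ℕ) < r then (piv (a : ℕ)).1 else s with hrowf
  set colf : Fin (r + 1) → Fin n := fun b => if (b : ℕ) < r then (piv (b : ℕ)).2 else t with hcolf
  set P : Matrix (Fin (r + 1)) (Fin (r + 1)) ℝ := Matrix.of fun a c =>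
    if (c : ℕ) < r then
      geIter A piv (c : ℕ) (rowf a) (piv (c : ℕ)).2 / geIter A piv (c : ℕ) (piv (c : ℕ)).1 (piv (c : ℕ)).2
    else (if a = c then 1 else 0) with hP
  set Q : Matrix (Fin (r + 1)) (Fin (r + 1)) ℝ := Matrix.of fun c b =>
    if (c : ℕ) < r then geIter A piv (c : ℕ) (piv (c : ℕ)).1 (colf b)
    else (if (b : ℕ) < r then 0 else geIter A piv r s t) with hQ
  have hlast : ∀ a : Fin (r + 1), ¬ ((a : ℕ) < r) → a = Fin.last r := by
    intro a ha
    apply Fin.ext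
    rw [Fin.val_last]
    omega
  have hBPQ : (Matrix.of fun a b : Fin (r + 1) => A (rowf a) (colf b)) = P * Q := by
    ext a b
    rw [Matrix.mul_apply]
    rw [Fin.sum_univ_castSucc]
    have hsum : ∀ c : Fin r, P a c.castSucc * Q c.castSucc b =
        geIter A piv (c : ℕ) (rowf a) (piv (c : ℕ)).2 *
          geIter A piv (c : ℕ) (piv (c : ℕ)).1 (colf b) /
          geIter A piv (c : ℕ) (piv (c : ℕ)).1 (piv (c : ℕ)).2 := by
      intro c
      have hc : ((c.castSucc : Fin (r+1)) : ℕ) < r := c.isLt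
      simp only [hP, hQ, Matrix.of_apply, Fin.coe_castSucc]
      rw [if_pos c.isLt, if_pos c.isLt, div_mul_eq_mul_div]
    rw [Finset.sum_congr rfl (fun c _ => hsum c)]
    have hlastP : P a (Fin.last r) = if a = Fin.last r then 1 else 0 := by
      simp [hP, Fin.val_last]
    have hlastQ : Q (Fin.last r) b = if (b : ℕ) < r then 0 else geIter A piv r s t := by
      simp [hQ, Fin.val_last]
    rw [hlastP, hlastQ]
    have htel := geIter_telescope A piv r (rowf a) (colf b)
    have hrange : ∑ c : Fin r, geIter A piv (c : ℕ) (rowf a) (piv (c : ℕ)).2 *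
          geIter A piv (c : ℕ) (piv (c : ℕ)).1 (colf b) /
          geIter A piv (c : ℕ) (piv (c : ℕ)).1 (piv (c : ℕ)).2
        = ∑ l ∈ range r, geIter A piv l (rowf a) (piv l).2 *
          geIter A piv l (piv l).1 (colf b) / geIter A piv l (piv l).1 (piv l).2 :=
      Fin.sum_univ_eq_sum_range (fun l => geIter A piv l (rowf a) (piv l).2 *
          geIter A piv l (piv l).1 (colf b) / geIter A piv l (piv l).1 (piv l).2) r
    rw [hrange]
    have hcorner : geIter A piv r (rowf a) (colf b) =
        (if a = Fin.last r then 1 else 0) * (if (b : ℕ) < r then 0 else geIter A piv r s t) := by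
      by_cases ha : (a : ℕ) < r
      · have ha' : a ≠ Fin.last r := by
          intro h; rw [h] at ha; simp [Fin.val_last] at ha
        rw [if_neg ha']
        have : rowf a = (piv (a : ℕ)).1 := by simp [hrowf, ha]
        rw [this, geIter_pivot_row_zero A piv ha (hr _ ha), zero_mul]
      · have ha' := hlast a ha
        rw [if_pos ha']
        have hra : rowf a = s := by simp [hrowf, ha]
        by_cases hb : (b : ℕ) < r
        · have : colf b = (piv (b : ℕ)).2 := by simp [hcolf, hb]
          rw [if_pos hb, this, geIter_pivot_col_zero A piv hb (hr _ hb), mul_zero]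
        · have hcb : colf b = t := by simp [hcolf, hb]
          rw [if_neg hb, hra, hcb, one_mul]
    rw [Matrix.of_apply, htel, hcorner]
  have hPtri : ∀ a c : Fin (r + 1), a < c → P a c = 0 := by
    intro a c hac
    by_cases hc : (c : ℕ) < r
    · have ha : (a : ℕ) < (c : ℕ) := hac
      have hrowa : rowf a = (piv (a : ℕ)).1 := by simp [hrowf, lt_trans ha hc]
      simp only [hP, Matrix.of_apply, if_pos hc, hrowa]
      rw [geIter_pivot_row_zero A piv ha (hr _ (lt_trans ha hc)), zero_div]
    · have hac' : a ≠ c := ne_of_lt hac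
      simp [hP, hc, hac']
  have hQtri : ∀ c b : Fin (r + 1), b < c → Q c b = 0 := by
    intro c b hbc
    by_cases hc : (c : ℕ) < r
    · have hb : (b : ℕ) < (c : ℕ) := hbc
      have hcolb : colf b = (piv (b : ℕ)).2 := by simp [hcolf, lt_trans hb hc]
      simp only [hQ, Matrix.of_apply, if_pos hc, hcolb]
      exact geIter_pivot_col_zero A piv hb (hr _ (lt_trans hb hc)) _
    · have hb : (b : ℕ) < r := by
        have := hlast c hc
        subst this
        simpa [Fin.lt_def, Fin.val_last] using hbc
      simp [hQ, hc, hb]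
  have hdetP : P.det = 1 := by
    rw [← Matrix.det_transpose]
    rw [Matrix.det_of_upperTriangular (by
      intro i j hij
      exact hPtri j i hij)]
    have : ∀ a : Fin (r + 1), P.transpose a a = 1 := by
      intro a
      by_cases ha : (a : ℕ) < r
      · simp only [Matrix.transpose_apply, hP, Matrix.of_apply, if_pos ha]
        have hrowa : rowf a = (piv (a : ℕ)).1 := by simp [hrowf, ha]
        rw [hrowa, div_self (hr _ ha)]
      · simp [hP, ha]
    rw [Finset.prod_congr rfl (fun a _ => this a), Finset.prod_const_one]
  have hdetQ : Q.det = (∏ l ∈ range r, geIter A piv l (piv l).1 (piv l).2) * geIter A piv r s t := by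
    rw [Matrix.det_of_upperTriangular (by
      intro i j hij
      exact hQtri i j hij)]
    rw [Fin.prod_univ_castSucc]
    have h1 : ∀ c : Fin r, Q c.castSucc c.castSucc = geIter A piv (c : ℕ) (piv (c : ℕ)).1 (piv (c : ℕ)).2 := by
      intro c
      have hc : ((c.castSucc : Fin (r+1)) : ℕ) < r := c.isLt
      have hcc : colf c.castSucc = (piv (c : ℕ)).2 := by simp [hcolf, hc]
      simp only [hQ, Matrix.of_apply, Fin.coe_castSucc]
      rw [if_pos c.isLt, hcc]
    have h2 : Q (Fin.last r) (Fin.last r) = geIter A piv r s t := by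
      simp [hQ, Fin.val_last]
    rw [Finset.prod_congr rfl (fun c _ => h1 c), h2]
    congr 1
    exact Fin.prod_univ_eq_prod_range (fun l => geIter A piv l (piv l).1 (piv l).2) r
  have : Matrix.det (Matrix.of fun a b : Fin (r + 1) => A (rowf a) (colf b)) = P.det * Q.det := by
    rw [hBPQ, Matrix.det_mul]
  rw [hrowf, hcolf] at this
  rw [this, hdetP, hdetQ, one_mul]

end Aux2


lemma prod_le_pow_of_nonneg {N : ℕ} (hN : 0 < N) (lam : Fin N → ℝ) (hlam : ∀ i, 0 ≤ lam i) :
    ∏ i, lam i ≤ ((∑ i, lam i) / N) ^ N := by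
  have hN' : (N : ℝ) ≠ 0 := Nat.cast_ne_zero.2 hN.ne'
  have hgm := Real.geom_mean_le_arith_mean_weighted Finset.univ (fun _ => 1 / N) lam
    (fun i _ => by positivity) (by rw [Finset.sum_const, Finset.card_univ, Fintype.card_fin, nsmul_eq_mul]; field_simp)
    (fun i _ => hlam i)
  have key : (∏ i, lam i ^ (1 / (N:ℝ))) ^ N = ∏ i, lam i := by
    rw [← Finset.prod_pow]
    refine Finset.prod_congr rfl fun i _ => ?_
    rw [← Real.rpow_natCast (lam i ^ (1 / (N:ℝ))) N, ← Real.rpow_mul (hlam i)]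
    rw [one_div_mul_cancel hN', Real.rpow_one]
  calc ∏ i, lam i = (∏ i, lam i ^ (1 / (N:ℝ))) ^ N := key.symm
    _ ≤ ((∑ i, (1 / (N:ℝ)) * lam i)) ^ N := by
        apply pow_le_pow_left₀ (Finset.prod_nonneg fun i _ => Real.rpow_nonneg (hlam i) _) hgm
    _ = ((∑ i, lam i) / N) ^ N := by
        rw [← Finset.mul_sum]
        ring_nf

lemma trace_eq_sum_eigenvalues {N : ℕ} {G : Matrix (Fin N) (Fin N) ℝ} (hG : G.IsHermitian) :
    G.trace = ∑ i, hG.eigenvalues i := by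
  simpa using hG.trace_eq_sum_eigenvalues

/-- Hadamard-type bound: squared determinant of an `N × N` real matrix with entries
bounded by `b` is at most `(N b²)^N`. -/
lemma det_sq_le_hadamard {N : ℕ} (M : Matrix (Fin N) (Fin N) ℝ) (b : ℝ)
    (hb : ∀ i j, |M i j| ≤ b) : M.det ^ 2 ≤ ((N : ℝ) * b ^ 2) ^ N := by
  rcases Nat.eq_zero_or_pos N with h0 | hN
  · subst h0; simp [Matrix.det_fin_zero]
  have hb0 : 0 ≤ b := (abs_nonneg _).trans (hb ⟨0, hN⟩ ⟨0, hN⟩)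
  set G := M.transpose * M with hGdef
  have hG : G.PosSemidef := by
    have := Matrix.posSemidef_conjTranspose_mul_self M
    rwa [Matrix.conjTranspose_eq_transpose_of_trivial] at this
  have hHerm := hG.1
  have hdet : M.det ^ 2 = G.det := by
    rw [hGdef, Matrix.det_mul, Matrix.det_transpose]; ring
  have hdetG : G.det = ∏ i, hHerm.eigenvalues i := by
    have := hHerm.det_eq_prod_eigenvalues
    simpa using this
  have htraceG : G.trace ≤ (N : ℝ) * ((N : ℝ) * b ^ 2) := by
    have hdiag : ∀ i, G i i ≤ (N : ℝ) * b ^ 2 := by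
      intro i
      have : G i i = ∑ s, M s i * M s i := by
        simp [hGdef, Matrix.mul_apply, Matrix.transpose_apply]
      rw [this]
      calc ∑ s, M s i * M s i ≤ ∑ _s : Fin N, b ^ 2 := by
            refine Finset.sum_le_sum fun s _ => ?_
            have := hb s i
            nlinarith [abs_nonneg (M s i), neg_abs_le (M s i), le_abs_self (M s i)]
        _ = (N : ℝ) * b ^ 2 := by simp [mul_comm]
    calc G.trace = ∑ i, G i i := rfl
      _ ≤ ∑ _i : Fin N, (N : ℝ) * b ^ 2 := Finset.sum_le_sum fun i _ => hdiag i
      _ = (N : ℝ) * ((N : ℝ) * b ^ 2) := by simp [mul_comm]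
  have hsum : ∑ i, hHerm.eigenvalues i = G.trace := (trace_eq_sum_eigenvalues hHerm).symm
  have hEnn : ∀ i, 0 ≤ hHerm.eigenvalues i := hG.eigenvalues_nonneg
  calc M.det ^ 2 = ∏ i, hHerm.eigenvalues i := by rw [hdet, hdetG]
    _ ≤ ((∑ i, hHerm.eigenvalues i) / N) ^ N := prod_le_pow_of_nonneg hN _ hEnn
    _ ≤ ((N : ℝ) * b ^ 2) ^ N := by
        apply pow_le_pow_left₀ (div_nonneg (Finset.sum_nonneg fun i _ => hEnn i) (Nat.cast_nonneg N))
        rw [hsum, div_le_iff₀ (by exact_mod_cast hN)]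
        linarith [htraceG]


/-- `S k = ∑_{u=1}^{k-1} log(u+1)/u`, indexed as `∑_{u ∈ range (k-1)} log(u+2)/(u+1)` -/
noncomputable def Ssum (k : ℕ) : ℝ := ∑ u ∈ range (k - 1), Real.log (u + 2) / (u + 1)

lemma log_succ_sub_log_ge {x : ℝ} (hx : 1 ≤ x) :
    1 / (x + 1) ≤ Real.log (x + 1) - Real.log x := by
  have hx0 : 0 < x := by linarith
  have h := Real.log_le_sub_one_of_pos (x := x / (x + 1)) (by positivity)
  rw [Real.log_div hx0.ne' (by positivity)] at h
  have : x / (x + 1) - 1 = -(1 / (x + 1)) := by field_simp; ring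
  linarith [this ▸ h]

lemma log_succ_sub_log_le {x : ℝ} (hx : 1 ≤ x) :
    Real.log (x + 1) - Real.log x ≤ 1 / x := by
  have hx0 : 0 < x := by linarith
  have h := Real.log_le_sub_one_of_pos (x := (x + 1) / x) (by positivity)
  rw [Real.log_div (by positivity) hx0.ne'] at h
  have : (x + 1) / x - 1 = 1 / x := by field_simp; ring
  linarith [this ▸ h]

lemma log_three_bounds : 1.095 ≤ Real.log 3 ∧ Real.log 3 ≤ 1.103 := by
  have h98u : Real.log (9/8) ≤ 1/8 := by
    have := Real.log_le_sub_one_of_pos (x := (9:ℝ)/8) (by norm_num)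
    linarith
  have h98l : (1:ℝ)/9 ≤ Real.log (9/8) := by
    have := Real.log_le_sub_one_of_pos (x := (8:ℝ)/9) (by norm_num)
    have h : Real.log ((8:ℝ)/9) = - Real.log ((9:ℝ)/8) := by
      rw [← Real.log_inv]; norm_num
    rw [h] at this
    linarith
  have h9 : Real.log (9:ℝ) = 2 * Real.log 3 := by
    rw [show (9:ℝ) = 3 ^ 2 by norm_num, Real.log_pow]; push_cast; ring
  have h8 : Real.log (8:ℝ) = 3 * Real.log 2 := by
    rw [show (8:ℝ) = 2 ^ 3 by norm_num, Real.log_pow]; push_cast; ring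
  have h98 : Real.log ((9:ℝ)/8) = Real.log 9 - Real.log 8 :=
    Real.log_div (by norm_num) (by norm_num)
  have l2 := Real.log_two_gt_d9
  have u2 := Real.log_two_lt_d9
  constructor <;> nlinarith

lemma Ssum_le : ∀ k : ℕ, 3 ≤ k →
    Ssum k ≤ (1/2) * (Real.log k)^2 + 1.85 - (Real.log (k + 1) + 2) / k := by
  intro k hk
  induction k, hk using Nat.le_induction with
  | base =>
    have : Ssum 3 = Real.log 2 + Real.log 3 / 2 := by
      simp [Ssum, Finset.sum_range_succ]
      norm_num
    rw [this]
    have l2 := Real.log_two_gt_d9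
    have u2 := Real.log_two_lt_d9
    obtain ⟨l3, u3⟩ := log_three_bounds
    have h4 : Real.log ((3:ℕ) + 1 : ℝ) = 2 * Real.log 2 := by
      norm_num
      rw [show (4:ℝ) = 2 ^ 2 by norm_num, Real.log_pow]; push_cast; ring
    rw [h4]
    have h3 : ((3:ℕ):ℝ) = 3 := by norm_num
    rw [h3]
    nlinarith
  | succ k hk3 ih =>
    have hk1 : (1:ℝ) ≤ (k:ℝ) := by exact_mod_cast Nat.one_le_of_lt hk3
    have hkr3 : (3:ℝ) ≤ (k:ℝ) := by exact_mod_cast hk3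
    have hS : Ssum (k + 1) = Ssum k + Real.log ((k:ℝ) + 1) / k := by
      have h1 : (k + 1) - 1 = (k - 1) + 1 := by omega
      rw [Ssum, h1, Finset.sum_range_succ]
      have h2 : ((k - 1 : ℕ) : ℝ) = (k : ℝ) - 1 := by
        have : 1 ≤ k := by omega
        push_cast [this]; ring
      rw [Ssum, h2, show (k:ℝ) - 1 + 2 = (k:ℝ) + 1 by ring, show (k:ℝ) - 1 + 1 = (k:ℝ) by ring]
    rw [hS]
    set x := Real.log ((k:ℝ) + 1) with hxdef
    set y := Real.log (k:ℝ) with hydef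
    set z := Real.log ((k:ℝ) + 2) with hzdef
    have hx0 : 0 ≤ x := Real.log_nonneg (by linarith)
    have hyx : y ≤ x := by
      apply Real.log_le_log (by linarith) (by linarith)
    have hD1 : 1 / ((k:ℝ) + 1) ≤ x - y := log_succ_sub_log_ge hk1
    have hD2 : x - y ≤ 1 / (k:ℝ) := log_succ_sub_log_le hk1
    have hz : z - x ≤ 1 / ((k:ℝ) + 1) := by
      have h := log_succ_sub_log_le (x := (k:ℝ) + 1) (by linarith)
      have e : (k:ℝ) + 1 + 1 = (k:ℝ) + 2 := by ring
      rw [e] at h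
      exact h
    -- goal : Ssum k + x / k ≤ 1/2 * (log (k+1))^2 + 1.85 - (log (k+2) + 2)/(k+1)
    have hgoal : ((k + 1 : ℕ) : ℝ) = (k:ℝ) + 1 := by push_cast; ring
    rw [hgoal, show (k:ℝ) + 1 + 1 = (k:ℝ) + 2 by ring, ← hxdef, ← hzdef]
    -- use IH
    have key : x / k + (z + 2) / ((k:ℝ) + 1) - (x + 2) / k ≤ (1/2) * x^2 - (1/2) * y^2 := by
      have e1 : (1/2) * x^2 - (1/2) * y^2 = (x - y) * x - (x - y)^2 / 2 := by ring
      have f1 : x / ((k:ℝ) + 1) ≤ (x - y) * x := by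
        have := mul_le_mul_of_nonneg_right hD1 hx0
        calc x / ((k:ℝ)+1) = (1 / ((k:ℝ)+1)) * x := by ring
          _ ≤ (x - y) * x := this
      have f2 : (x - y)^2 ≤ (1 / (k:ℝ))^2 := by
        apply pow_le_pow_left₀ (by linarith) hD2
      have f3 : (z + 2) / ((k:ℝ) + 1) ≤ (x + 1 / ((k:ℝ)+1) + 2) / ((k:ℝ) + 1) := by
        gcongr
        linarith
      have g1 : x / k + (x + 1 / ((k:ℝ)+1) + 2) / ((k:ℝ) + 1) - (x + 2) / k
          = x / ((k:ℝ)+1) + 1 / ((k:ℝ)+1)^2 - 2 / ((k:ℝ) * ((k:ℝ)+1)) := by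
        field_simp
        ring
      have g2 : 1 / (((k:ℝ)+1)^2) + 1 / (2 * (k:ℝ)^2) ≤ 2 / ((k:ℝ) * ((k:ℝ)+1)) := by
        rw [div_add_div _ _ (by positivity) (by positivity),
          div_le_div_iff₀ (by positivity) (by positivity)]
        nlinarith
      have f2' : (x - y)^2 ≤ 1 / (k:ℝ)^2 := by
        rw [div_pow, one_pow] at f2
        exact f2
      have g3 : 1 / (2 * (k:ℝ)^2) = (1 / (k:ℝ)^2) / 2 := by ring
      linarith
    linarith [ih]

lemma exp_two_gt : (7.389056 : ℝ) < Real.exp 2 := by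
  have h := Real.exp_one_gt_d9
  have : Real.exp 2 = Real.exp 1 * Real.exp 1 := by
    rw [← Real.exp_add]; norm_num
  nlinarith

lemma delta_bound {k : ℕ} (hk : 3 ≤ k) :
    (1 + Real.log ((k:ℝ) + 1)) / (2 * (k:ℝ)) ≤ 0.461 := by
  have hkr : (3:ℝ) ≤ (k:ℝ) := by exact_mod_cast hk
  have hlog : Real.log ((k:ℝ) + 1) ≤ ((k:ℝ) + 1) / Real.exp 2 + 1 := by
    have h := Real.log_le_sub_one_of_pos (x := ((k:ℝ) + 1) / Real.exp 2) (by positivity)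
    rw [Real.log_div (by linarith) (Real.exp_ne_zero 2), Real.log_exp] at h
    linarith
  have he := exp_two_gt
  have h2 : ((k:ℝ) + 1) / Real.exp 2 ≤ ((k:ℝ) + 1) / 7.389056 := by
    apply div_le_div_of_nonneg_left (by linarith) (by norm_num) (by linarith)
  rw [div_le_iff₀ (by linarith)]
  have : ((k:ℝ) + 1) / 7.389056 ≤ ((k:ℝ) + 1) * 0.13534 := by
    rw [div_le_iff₀ (by norm_num)]
    nlinarith
  nlinarith

lemma sum_inv_mul_succ (N : ℕ) :
    ∑ i ∈ range N, (1:ℝ) / (((i:ℝ) + 1) * ((i:ℝ) + 2)) = 1 - 1 / ((N:ℝ) + 1) := by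
  induction N with
  | zero => simp
  | succ N ih =>
    rw [Finset.sum_range_succ, ih]
    push_cast
    have h1 : (N:ℝ) + 1 ≠ 0 := by positivity
    have h2 : (N:ℝ) + 2 ≠ 0 := by positivity
    field_simp
    ring

lemma sum_harmonic_eq (k : ℕ) :
    ∑ i ∈ range k, (1:ℝ) / ((i:ℝ) + 1) = ((harmonic k : ℚ) : ℝ) := by
  rw [harmonic]
  push_cast
  simp [one_div]

section Constraint
variable {m n : ℕ}

lemma constraint_lemma [NeZero m] [NeZero n] (A : Matrix (Fin m) (Fin n) ℝ)
    (piv : ℕ → Fin m × Fin n) (k : ℕ) (β : ℝ) (hβpos : 0 < β)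
    (hpiv : ∀ r < k, geIter A piv r (piv r).1 (piv r).2 ≠ 0)
    (hmag : ∀ l < k, |geIter A piv l (piv l).1 (piv l).2| = β * maxAbs (geIter A piv l))
    (hbk : 0 < maxAbs (geIter A piv k))
    (j : ℕ) (hj : j < k) :
    Real.log (maxAbs (geIter A piv k)) + ∑ l ∈ Finset.Ico j k, Real.log (maxAbs (geIter A piv l)) ≤
      ((k:ℝ) - j) * Real.log β⁻¹
      + (((k:ℝ) - j + 1)/2) * Real.log ((k:ℝ) - j + 1)
      + ((k:ℝ) - j + 1) * Real.log (maxAbs (geIter A piv j)) := by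
  have hbpos : ∀ l < k, 0 < maxAbs (geIter A piv l) := fun l hl =>
    lt_of_lt_of_le (abs_pos.2 (hpiv l hl)) (abs_le_maxAbs _ _ _)
  set r' := k - j with hr'
  have hjr : j + r' = k := by omega
  set A' := geIter A piv j with hA'
  set piv' : ℕ → Fin m × Fin n := fun i => piv (j + i) with hpiv'def
  have hsh : ∀ l, geIter A' piv' l = geIter A piv (j + l) := fun l =>
    (geIter_shift A piv j l).symm
  have hpiv' : ∀ l < r', geIter A' piv' l (piv' l).1 (piv' l).2 ≠ 0 := by
    intro l hl
    rw [hsh]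
    exact hpiv (j + l) (by omega)
  obtain ⟨s, t, hst⟩ := exists_maxAbs (geIter A piv k)
  have hdet := det_minor_eq A' piv' r' hpiv' s t
  have hkst : geIter A' piv' r' = geIter A piv k := by rw [hsh, hjr]
  rw [hkst] at hdet
  have hB := det_sq_le_hadamard
    (Matrix.of fun a b : Fin (r' + 1) =>
      A' (if (a : ℕ) < r' then (piv' (a : ℕ)).1 else s) (if (b : ℕ) < r' then (piv' (b : ℕ)).2 else t))
    (maxAbs A') (fun i j' => abs_le_maxAbs A' _ _)
  rw [hdet] at hB
  -- rewrite the square of the product as product of absolute values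
  set Pprod := ∏ l ∈ Finset.range r', geIter A' piv' l (piv' l).1 (piv' l).2 with hPprod
  have habs : (Pprod * geIter A piv k s t)^2 =
      ((∏ l ∈ Finset.range r', |geIter A' piv' l (piv' l).1 (piv' l).2|) *
        maxAbs (geIter A piv k))^2 := by
    rw [← abs_prod, hst, ← abs_mul, sq_abs]
  rw [habs] at hB
  set Pa := ∏ l ∈ Finset.range r', |geIter A' piv' l (piv' l).1 (piv' l).2| with hPa
  have hPapos : 0 < Pa := Finset.prod_pos fun l hl =>
    abs_pos.2 (hpiv' l (Finset.mem_range.1 hl))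
  have hbj : 0 < maxAbs A' := hbpos j hj
  have hLHSpos : 0 < (Pa * maxAbs (geIter A piv k))^2 := by positivity
  have hlog := Real.log_le_log hLHSpos hB
  rw [Real.log_pow, Real.log_pow, Real.log_mul (by positivity) (by positivity),
    Real.log_mul (by positivity) (by positivity), Real.log_pow] at hlog
  -- hlog : 2 * (log Pa + log b_k) ≤ (r'+1) * (log (r'+1) + 2 * log (maxAbs A'))
  have hlogPa : Real.log Pa = r' * Real.log β +
      ∑ l ∈ Finset.Ico j k, Real.log (maxAbs (geIter A piv l)) := by
    rw [hPa, Real.log_prod (fun l hl => (abs_ne_zero.2 (hpiv' l (Finset.mem_range.1 hl))))]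
    have : ∀ l ∈ Finset.range r', Real.log |geIter A' piv' l (piv' l).1 (piv' l).2| =
        Real.log β + Real.log (maxAbs (geIter A piv (j + l))) := by
      intro l hl
      have hlk : j + l < k := by
        have := Finset.mem_range.1 hl
        omega
      rw [hsh]
      show Real.log |geIter A piv (j+l) (piv (j+l)).1 (piv (j+l)).2| = _
      rw [hmag (j + l) hlk, Real.log_mul hβpos.ne' (hbpos _ hlk).ne']
    rw [Finset.sum_congr rfl this, Finset.sum_add_distrib, Finset.sum_const,
      Finset.card_range, nsmul_eq_mul]
    congr 1
    rw [Finset.sum_Ico_eq_sum_range]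
  rw [hlogPa] at hlog
  have hcast : ((r' : ℕ) : ℝ) = (k:ℝ) - j := by
    rw [hr']
    push_cast [Nat.cast_sub hj.le]
    ring
  have hcast2 : ((r' + 1 : ℕ) : ℝ) = (k:ℝ) - j + 1 := by push_cast [hcast]; ring
  rw [hcast2] at hlog
  have hLβ : Real.log β⁻¹ = - Real.log β := Real.log_inv β
  have hcast' : (r' : ℝ) = (k:ℝ) - j := hcast
  rw [hcast'] at hlog
  rw [hLβ]
  push_cast at hlog
  linarith
end Constraint

section WSum

noncomputable def wfun (k : ℕ) : ℕ → ℝ := fun j =>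
  if j = 0 then 1/(k:ℝ) else 1/(((k:ℝ) - j) * (((k:ℝ) - j) + 1))

lemma wfun_pos {k j : ℕ} (hk : 1 ≤ k) (hj : j < k) : 0 < wfun k j := by
  rw [wfun]
  by_cases h : j = 0
  · rw [if_pos h]
    positivity
  · rw [if_neg h]
    have : (j:ℝ) < k := by exact_mod_cast hj
    have h1 : 0 < (k:ℝ) - j := by linarith
    positivity

lemma wfun_reflect {k : ℕ} (hk : 1 ≤ k) (F : ℝ → ℝ) :
    ∑ j ∈ Finset.range k, wfun k j * F ((k:ℝ) - j) =
      (∑ i ∈ Finset.range (k-1), (1/(((i:ℝ)+1) * ((i:ℝ)+2))) * F ((i:ℝ)+1))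
        + (1/(k:ℝ)) * F (k:ℝ) := by
  obtain ⟨K, rfl⟩ : ∃ K, k = K + 1 := ⟨k - 1, by omega⟩
  rw [← Finset.sum_range_reflect, Finset.sum_range_succ]
  simp only [Nat.add_sub_cancel]
  congr 1
  · apply Finset.sum_congr rfl
    intro i hi
    have hi' : i < K := Finset.mem_range.1 hi
    have hKi : K - i ≠ 0 := by omega
    have e : ((K + 1 : ℕ):ℝ) - ((K - i : ℕ):ℝ) = (i:ℝ) + 1 := by
      push_cast [Nat.cast_sub hi'.le]
      ring
    rw [wfun, if_neg hKi, e, show (i:ℝ) + 1 + 1 = (i:ℝ) + 2 by ring]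
  · rw [Nat.sub_self, wfun, if_pos rfl, Nat.cast_zero, sub_zero]

lemma wfun_sum_one {k : ℕ} (hk : 1 ≤ k) : ∑ j ∈ Finset.range k, wfun k j = 1 := by
  have h := wfun_reflect hk (fun _ => 1)
  simp only [mul_one] at h
  rw [h, sum_inv_mul_succ]
  have hc : ((k - 1 : ℕ) : ℝ) + 1 = (k:ℝ) := by
    push_cast [Nat.cast_sub hk]
    ring
  rw [hc]
  have : (k:ℝ) ≠ 0 := by positivity
  field_simp
  ring

lemma wfun_sum_harm {k : ℕ} (hk : 1 ≤ k) :
    ∑ j ∈ Finset.range k, wfun k j * ((k:ℝ) - j) = ((harmonic k : ℚ) : ℝ) := by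
  have h := wfun_reflect hk (fun x => x)
  rw [h, ← sum_harmonic_eq]
  have hterm : ∀ i ∈ Finset.range (k-1),
      (1/(((i:ℝ)+1) * ((i:ℝ)+2))) * ((i:ℝ)+1) = 1/((i:ℝ)+2) := by
    intro i hi
    have h1 : ((i:ℝ)+1) ≠ 0 := by positivity
    have h2 : ((i:ℝ)+2) ≠ 0 := by positivity
    field_simp
  rw [Finset.sum_congr rfl hterm]
  obtain ⟨K, rfl⟩ : ∃ K, k = K + 1 := ⟨k - 1, by omega⟩
  rw [Finset.sum_range_succ' (fun i => (1:ℝ)/((i:ℝ)+1)) K]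
  simp only [Nat.add_sub_cancel]
  have hkne : ((K:ℝ) + 1) ≠ 0 := by positivity
  push_cast
  rw [div_mul_cancel₀ 1 (by positivity : ((K:ℝ)+1) ≠ 0)]
  norm_num
  apply Finset.sum_congr rfl
  intro i hi
  norm_num
  ring_nf

lemma wfun_sum_log {k : ℕ} (hk : 1 ≤ k) :
    ∑ j ∈ Finset.range k, wfun k j * ((((k:ℝ) - j) + 1)/2 * Real.log (((k:ℝ) - j) + 1)) =
      (1/2) * Ssum k + (((k:ℝ)+1)/(2*(k:ℝ))) * Real.log ((k:ℝ)+1) := by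
  have h := wfun_reflect hk (fun x => ((x+1)/2) * Real.log (x+1))
  rw [h]
  have hkne : (k:ℝ) ≠ 0 := by positivity
  congr 1
  · rw [Ssum, Finset.mul_sum]
    apply Finset.sum_congr rfl
    intro i hi
    have h1 : ((i:ℝ)+1) ≠ 0 := by positivity
    have h2 : ((i:ℝ)+2) ≠ 0 := by positivity
    rw [show (i:ℝ) + 1 + 1 = (i:ℝ) + 2 by ring]
    field_simp
  · rw [← mul_assoc]
    congr 1
    rw [div_mul_div_comm, one_mul, mul_comm]

lemma wfun_partial {k : ℕ} (l : ℕ) (hl : l < k) :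
    ∑ j ∈ Finset.range (l+1), wfun k j = 1/((k:ℝ) - l) := by
  induction l with
  | zero =>
    simp [wfun]
  | succ l ih =>
    have hl' : l < k := by omega
    rw [Finset.sum_range_succ, ih hl']
    have hc1 : 0 < (k:ℝ) - l - 1 := by
      have : ((l:ℕ):ℝ) + 1 + 1 ≤ (k:ℝ) := by exact_mod_cast hl
      linarith
    have hc2 : 0 < (k:ℝ) - l := by linarith
    rw [wfun, if_neg (Nat.succ_ne_zero l)]
    push_cast
    rw [show (k:ℝ) - ((l:ℝ) + 1) = (k:ℝ) - l - 1 by ring,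
      show (k:ℝ) - l - 1 + 1 = (k:ℝ) - l by ring]
    field_simp
    ring
end WSum

set_option maxHeartbeats 2000000 in
/-- **Example 1, simplified bound.** If all pivot qualities equal a common value
`β ∈ (0,1]`, then using `H_{k-2} ≤ 1 + log k`,
`ρ_k(A) ≤ 4 β⁻³ k^{1/2 - log β + (1/4) log k}`. -/
theorem ge_growth_common_pivot_quality_simplified
    (m n k : ℕ) (A : Matrix (Fin m) (Fin n) ℝ) (hA : A ≠ 0)
    (hk : 3 ≤ k) (hkmn : k ≤ min m n)
    (piv : ℕ → Fin m × Fin n)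
    (hpiv : ∀ r < k, geIter A piv r (piv r).1 (piv r).2 ≠ 0)
    (β : ℝ) (hβpos : 0 < β) (hβle : β ≤ 1)
    (hβdef : ∀ r, 1 ≤ r → r ≤ k →
      β = pivMag A piv r / maxAbs (geIter A piv (r - 1))) :
    maxAbs (geIter A piv k) / maxAbs A ≤
      4 * (β⁻¹) ^ 3 *
        (k : ℝ) ^ ((1 / 2 : ℝ) - Real.log β + (1 / 4 : ℝ) * Real.log k) := by
  have hm : 3 ≤ m := le_trans hk (le_trans hkmn (min_le_left m n))
  have hn : 3 ≤ n := le_trans hk (le_trans hkmn (min_le_right m n))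
  haveI : NeZero m := ⟨by omega⟩
  haveI : NeZero n := ⟨by omega⟩
  have hk1 : 1 ≤ k := by omega
  have hkr : (3:ℝ) ≤ (k:ℝ) := by exact_mod_cast hk
  have hβne : β ≠ 0 := hβpos.ne'
  have hRpos : 0 < 4 * (β⁻¹) ^ 3 *
      (k : ℝ) ^ ((1 / 2 : ℝ) - Real.log β + (1 / 4 : ℝ) * Real.log k) := by positivity
  have hbpos : ∀ l < k, 0 < maxAbs (geIter A piv l) := fun l hl =>
    lt_of_lt_of_le (abs_pos.2 (hpiv l hl)) (abs_le_maxAbs _ _ _)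
  have hb0 : 0 < maxAbs A := maxAbs_pos A hA
  rcases le_or_gt (maxAbs (geIter A piv k)) 0 with hbk | hbk
  · exact le_trans (div_nonpos_of_nonpos_of_nonneg hbk hb0.le) hRpos.le
  have hmag : ∀ l < k, |geIter A piv l (piv l).1 (piv l).2| = β * maxAbs (geIter A piv l) := by
    intro l hl
    have h := hβdef (l+1) (by omega) (by omega)
    rw [pivMag, Nat.add_sub_cancel] at h
    rw [h, div_mul_cancel₀ _ (hbpos l hl).ne']
  set a : ℕ → ℝ := fun l => Real.log (maxAbs (geIter A piv l)) with hadef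
  have hcon : ∀ j ∈ Finset.range k,
      wfun k j * (a k + ∑ l ∈ Finset.Ico j k, a l) ≤
      wfun k j * (((k:ℝ) - j) * Real.log β⁻¹
        + (((k:ℝ) - j + 1)/2) * Real.log ((k:ℝ) - j + 1)
        + ((k:ℝ) - j + 1) * a j) := by
    intro j hj
    have hjk := Finset.mem_range.1 hj
    exact mul_le_mul_of_nonneg_left
      (constraint_lemma A piv k β hβpos hpiv hmag hbk j hjk) (wfun_pos hk1 hjk).le
  have hmain := Finset.sum_le_sum hcon
  have hLHS : ∑ j ∈ Finset.range k, wfun k j * (a k + ∑ l ∈ Finset.Ico j k, a l) =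
      a k + ∑ l ∈ Finset.range k, (1/((k:ℝ) - l)) * a l := by
    simp_rw [mul_add]
    rw [Finset.sum_add_distrib, ← Finset.sum_mul, wfun_sum_one hk1, one_mul]
    congr 1
    calc ∑ j ∈ Finset.range k, wfun k j * ∑ l ∈ Finset.Ico j k, a l
        = ∑ j ∈ Finset.range k, ∑ l ∈ Finset.Ico j k, wfun k j * a l := by
          simp_rw [Finset.mul_sum]
      _ = ∑ l ∈ Finset.range k, ∑ j ∈ Finset.range (l+1), wfun k j * a l := by
          rw [Finset.range_eq_Ico, Finset.sum_Ico_Ico_comm]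
          simp only [Finset.range_eq_Ico]
      _ = ∑ l ∈ Finset.range k, (1/((k:ℝ) - l)) * a l := by
          apply Finset.sum_congr rfl
          intro l hl
          rw [← Finset.sum_mul, wfun_partial l (Finset.mem_range.1 hl)]
  have hRHS : ∑ j ∈ Finset.range k, (wfun k j * (((k:ℝ) - j) * Real.log β⁻¹
        + (((k:ℝ) - j + 1)/2) * Real.log ((k:ℝ) - j + 1)
        + ((k:ℝ) - j + 1) * a j))
      = ((harmonic k : ℚ) : ℝ) * Real.log β⁻¹
        + ((1/2) * Ssum k + (((k:ℝ)+1)/(2*(k:ℝ))) * Real.log ((k:ℝ)+1))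
        + (∑ l ∈ Finset.range k, (1/((k:ℝ) - l)) * a l + a 0) := by
    have hsplit : ∀ j ∈ Finset.range k, wfun k j * (((k:ℝ) - j) * Real.log β⁻¹
        + (((k:ℝ) - j + 1)/2) * Real.log ((k:ℝ) - j + 1)
        + ((k:ℝ) - j + 1) * a j)
        = (wfun k j * ((k:ℝ) - j)) * Real.log β⁻¹
          + wfun k j * ((((k:ℝ) - j) + 1)/2 * Real.log (((k:ℝ) - j) + 1))
          + wfun k j * (((k:ℝ) - j + 1) * a j) := by
      intro j hj
      ring
    rw [Finset.sum_congr rfl hsplit, Finset.sum_add_distrib, Finset.sum_add_distrib,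
      ← Finset.sum_mul, wfun_sum_harm hk1, wfun_sum_log hk1]
    congr 1
    have hthird : ∀ j ∈ Finset.range k, wfun k j * (((k:ℝ) - j + 1) * a j)
        = (1/((k:ℝ) - j)) * a j + (if j = 0 then a 0 else 0) := by
      intro j hj
      have hjk := Finset.mem_range.1 hj
      by_cases h : j = 0
      · subst h
        rw [if_pos rfl, wfun, if_pos rfl]
        have hkne : (k:ℝ) ≠ 0 := by positivity
        push_cast
        field_simp
        ring
      · rw [if_neg h, wfun, if_neg h]
        have hj1 : (j:ℝ) < (k:ℝ) := by exact_mod_cast hjk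
        have h1 : (0:ℝ) < (k:ℝ) - j := by linarith
        have h2 : (0:ℝ) < (k:ℝ) - j + 1 := by linarith
        field_simp
        ring
    rw [Finset.sum_congr rfl hthird, Finset.sum_add_distrib,
      Finset.sum_ite_eq' (Finset.range k) 0 (fun _ => a 0),
      if_pos (Finset.mem_range.2 (by omega : 0 < k))]
  rw [hLHS, hRHS] at hmain
  have hkey : a k - a 0 ≤ ((harmonic k : ℚ) : ℝ) * Real.log β⁻¹
      + ((1/2) * Ssum k + (((k:ℝ)+1)/(2*(k:ℝ))) * Real.log ((k:ℝ)+1)) := by linarith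
  -- analytic estimates
  set L := Real.log β⁻¹ with hLdef
  have hLeq : L = - Real.log β := Real.log_inv β
  have hL0 : 0 ≤ L := by
    rw [hLeq]
    linarith [Real.log_nonpos hβpos.le hβle]
  have hharm : ((harmonic k : ℚ) : ℝ) ≤ 1 + Real.log k := harmonic_le_one_add_log k
  have hharm0 : 0 ≤ ((harmonic k : ℚ) : ℝ) := by
    rw [← sum_harmonic_eq]
    apply Finset.sum_nonneg
    intro i _
    positivity
  have t1 : ((harmonic k : ℚ) : ℝ) * L ≤ (1 + Real.log k) * L :=
    mul_le_mul_of_nonneg_right hharm hL0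
  have hlogk1 : 0 ≤ Real.log ((k:ℝ)+1) := Real.log_nonneg (by linarith)
  have hlogk0 : 0 ≤ Real.log (k:ℝ) := Real.log_nonneg (by linarith)
  have hS : Ssum k ≤ (1/2) * (Real.log k)^2 + 1.85 := by
    have h := Ssum_le k hk
    have hφ : 0 ≤ (Real.log ((k:ℝ) + 1) + 2) / (k:ℝ) := by positivity
    have hcast : Real.log ((k:ℕ) + 1 : ℝ) = Real.log ((k:ℝ)+1) := by norm_num
    linarith [h]
  have t2 : (((k:ℝ)+1)/(2*(k:ℝ))) * Real.log ((k:ℝ)+1) ≤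
      (1/2) * Real.log k + (1 + Real.log ((k:ℝ)+1))/(2*(k:ℝ)) := by
    set x := Real.log ((k:ℝ)+1)
    set y := Real.log (k:ℝ)
    have hd : x - y ≤ 1/(k:ℝ) := log_succ_sub_log_le (by linarith)
    have h1 : (k:ℝ) * (x - y) ≤ 1 := by
      have := mul_le_mul_of_nonneg_left hd (by linarith : (0:ℝ) ≤ (k:ℝ))
      rw [mul_one_div, div_self (by linarith : (k:ℝ) ≠ 0)] at this
      linarith
    rw [div_mul_eq_mul_div, div_le_iff₀ (by linarith : (0:ℝ) < 2*(k:ℝ))]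
    have e : ((1/2) * y + (1 + x)/(2*(k:ℝ))) * (2*(k:ℝ)) = (k:ℝ)*y + 1 + x := by
      field_simp
      ring
    rw [e]
    linarith [h1]
  have t3 : (1 + Real.log ((k:ℝ)+1))/(2*(k:ℝ)) ≤ 0.461 := delta_bound hk
  have l4 : (1.386:ℝ) ≤ Real.log 4 := by
    rw [show (4:ℝ) = 2^2 by norm_num, Real.log_pow]
    push_cast
    linarith [Real.log_two_gt_d9]
  -- conclude via logs
  have hfrac : 0 < maxAbs (geIter A piv k) / maxAbs A := div_pos hbk hb0
  rw [← Real.log_le_log_iff hfrac hRpos]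
  have hA0 : geIter A piv 0 = A := rfl
  have hlogdiv : Real.log (maxAbs (geIter A piv k) / maxAbs A) = a k - a 0 := by
    rw [Real.log_div hbk.ne' hb0.ne']
    simp only [hadef, hA0]
  have hlogR : Real.log (4 * (β⁻¹) ^ 3 *
      (k : ℝ) ^ ((1 / 2 : ℝ) - Real.log β + (1 / 4 : ℝ) * Real.log k))
      = Real.log 4 + 3 * L + ((1/2 : ℝ) + L + (1/4 : ℝ) * Real.log k) * Real.log k := by
    rw [Real.log_mul (by positivity) (by positivity), Real.log_mul (by norm_num) (by positivity),
      Real.log_pow, Real.log_rpow (by linarith : (0:ℝ) < (k:ℝ))]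
    rw [← hLdef, hLeq]
    push_cast
    ring
  rw [hlogdiv, hlogR]
  linarith [hkey, t1, t2, t3, hS, l4, hL0, hlogk0,
    mul_le_mul_of_nonneg_right hL0 hlogk0]
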